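/- For the complex 3-dimensional Heisenberg Lie algebra with basis X, Y, Z and only nonzero bracket [X,Z] = Y (up to sign), for any Hermitian form h ∈ Sym^{1,1}(g) the square h# is a nonnegative multiple of Y⊗Ȳ; in particular (h#)# = 0, and the ODE ∂_t h = h# has the explicit global solution h(t) = h₀ + t·h₀#, which grows linearly in t. -/

import Mathlib

open scoped BigOperators ComplexConjugate

/-- The coordinate form of the `#` operation on `Sym^{1,1}(g)` for a complex Lie algebra
`g` (Hermitian elements of `g ⊗ ḡ` being recorded by their coefficient matrices `h^{αβ}`
in a chosen basis): `(h#k)^{αβ} = c^α_{εδ} conj(c^β_{γθ}) h^{εγ} k^{δθ}`, where `c` are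
the structure constants.  On pure tensors this is
`(v₁ ⊗ v̄₂) # (w₁ ⊗ w̄₂) = ⁅v₁, w₁⁆ ⊗ conj ⁅v₂, w₂⁆`. -/
noncomputable def sharpMatC {ι : Type*} [Fintype ι] (c : ι → ι → ι → ℂ) (h k : ι → ι → ℂ) : ι → ι → ℂ :=
  fun α β => ∑ ε, ∑ δ, ∑ γ, ∑ θ, c ε δ α * conj (c γ θ β) * h ε γ * k δ θ

/-- The quadratic square `h# = (1/2) h # h`. -/
noncomputable def sharpSqC {ι : Type*} [Fintype ι] (c : ι → ι → ι → ℂ) (h : ι → ι → ℂ) :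
    ι → ι → ℂ :=
  fun α β => (1 / 2 : ℂ) * sharpMatC c h h α β

/-- Evaluation of a Hermitian form `h ∈ Sym^{1,1}(g)` on a functional `ξ ∈ g*`
(given by coordinates): `h(ξ, ξ̄) = Σ ξ_α conj(ξ_β) h^{αβ}`. -/
noncomputable def quadC {ι : Type*} [Fintype ι] (h : ι → ι → ℂ) (ξ : ι → ℂ) : ℂ :=
  ∑ α, ∑ β, ξ α * conj (ξ β) * h α β

/-- A coefficient matrix is Hermitian. -/
def HermMatC {ι : Type*} (h : ι → ι → ℂ) : Prop := ∀ α β, h α β = conj (h β α)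

/-- Positive semidefiniteness of a Hermitian form on `g*`. -/
def PosSemidefC {ι : Type*} [Fintype ι] (h : ι → ι → ℂ) : Prop :=
  ∀ ξ : ι → ℂ, 0 ≤ (quadC h ξ).re

/-- Positive definiteness of a Hermitian form on `g*`. -/
def PosDefC {ι : Type*} [Fintype ι] (h : ι → ι → ℂ) : Prop :=
  ∀ ξ : ι → ℂ, ξ ≠ 0 → 0 < (quadC h ξ).re

/-- Structure constants of a complex Lie algebra relative to a basis. -/
noncomputable def structConstC {ι : Type*} [Fintype ι] (L : Type*) [LieRing L] [LieAlgebra ℂ L]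
    (b : Module.Basis ι ℂ L) : ι → ι → ι → ℂ :=
  fun i j k => b.repr ⁅b i, b j⁆ k

/-- The structure constants of the 3-dimensional complex Heisenberg Lie algebra in the
basis `X = e₀, Y = e₁, Z = e₂`, with only nonzero bracket `⁅X, Z⁆ = Y`. -/
def heisenbergC : Fin 3 → Fin 3 → Fin 3 → ℂ := fun i j k =>
  if i = 0 ∧ j = 2 ∧ k = 1 then 1 else if i = 2 ∧ j = 0 ∧ k = 1 then -1 else 0

lemma sharpSq_eq (g : Fin 3 → Fin 3 → ℂ) :
    sharpSqC heisenbergC g = fun α β =>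
      if α = 1 ∧ β = 1 then g 0 0 * g 2 2 - g 0 2 * g 2 0 else 0 := by
  funext α β
  fin_cases α <;> fin_cases β <;>
    simp [sharpSqC, sharpMatC, heisenbergC, Fin.sum_univ_three] <;> ring

lemma quadC_three (h : Fin 3 → Fin 3 → ℂ) (ξ : Fin 3 → ℂ) :
    quadC h ξ =
      ξ 0 * conj (ξ 0) * h 0 0 + ξ 0 * conj (ξ 1) * h 0 1 + ξ 0 * conj (ξ 2) * h 0 2 +
      (ξ 1 * conj (ξ 0) * h 1 0 + ξ 1 * conj (ξ 1) * h 1 1 + ξ 1 * conj (ξ 2) * h 1 2) +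
      (ξ 2 * conj (ξ 0) * h 2 0 + ξ 2 * conj (ξ 1) * h 2 1 + ξ 2 * conj (ξ 2) * h 2 2) := by
  simp [quadC, Fin.sum_univ_three]

lemma det_nonneg (h : Fin 3 → Fin 3 → ℂ)
    (hherm : HermMatC h) (hpsd : PosSemidefC h) :
    ∃ μ : ℝ, 0 ≤ μ ∧ h 0 0 * h 2 2 - h 0 2 * h 2 0 = (μ : ℂ) := by
  have h00 : h 0 0 = ((h 0 0).re : ℂ) :=
    (Complex.conj_eq_iff_re.mp (hherm 0 0).symm).symm
  have h22 : h 2 2 = ((h 2 2).re : ℂ) :=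
    (Complex.conj_eq_iff_re.mp (hherm 2 2).symm).symm
  have h20 : h 2 0 = conj (h 0 2) := hherm 2 0
  have h00nn : 0 ≤ (h 0 0).re := by
    have := hpsd (fun i => if i = 0 then 1 else 0)
    rw [quadC_three] at this
    simpa using this
  have h22nn : 0 ≤ (h 2 2).re := by
    have := hpsd (fun i => if i = 2 then 1 else 0)
    rw [quadC_three] at this
    simpa using this
  set n : ℝ := Complex.normSq (h 0 2) with hn
  have key : (h 0 0 * h 2 2 - h 0 2 * h 2 0 : ℂ)
      = (((h 0 0).re * (h 2 2).re - n : ℝ) : ℂ) := by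
    rw [h20, Complex.mul_conj, ← hn]
    nth_rewrite 1 [h00, h22]
    push_cast
    ring
  refine ⟨(h 0 0).re * (h 2 2).re - n, ?_, key⟩
  by_cases hc : h 0 2 = 0
  · have : n = 0 := by simp [hn, hc]
    rw [this, sub_zero]
    positivity
  · have hmc : h 0 2 * conj (h 0 2) = (n : ℂ) := by rw [Complex.mul_conj, hn]
    have quad : ∀ t : ℝ,
        0 ≤ (n * (h 0 0).re) * (t * t) + (-2 * n) * t + (h 2 2).re := by
      intro t
      have e : quadC h ![-(t : ℂ) * h 2 0, 0, 1]
          = (((n * (h 0 0).re) * (t * t) + (-2 * n) * t + (h 2 2).re : ℝ) : ℂ) := by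
        rw [quadC_three]
        simp only [Matrix.cons_val_zero, Matrix.cons_val_one, Matrix.head_cons,
          Matrix.cons_val_two, Matrix.tail_cons, map_zero, map_one, mul_zero, zero_mul,
          mul_one, one_mul, add_zero, zero_add]
        rw [h20, map_mul, map_neg, Complex.conj_conj, Complex.conj_ofReal]
        nth_rewrite 1 [h00]
        nth_rewrite 1 [h22]
        push_cast
        linear_combination (((t : ℂ) * (t : ℂ)) * ((h 0 0).re : ℂ) - 2 * (t : ℂ)) * hmc
      have := hpsd ![-(t : ℂ) * h 2 0, 0, 1]
      rw [e, Complex.ofReal_re] at this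
      exact this
    have hdisc := discrim_le_zero quad
    have hnpos : 0 < n := by
      simpa [hn] using Complex.normSq_pos.mpr hc
    rw [discrim] at hdisc
    nlinarith [hdisc, hnpos]

/-- for the complex Heisenberg Lie algebra with basis `X, Y, Z` and only
nonzero bracket `⁅X, Z⁆ = Y`, for any (positive semidefinite) Hermitian form
`h ∈ Sym^{1,1}(g)` the square `h#` is a nonnegative multiple of `Y ⊗ Ȳ`; in particular
`(h#)# = 0`, and the ODE `∂ₜ h = h#` has the explicit global solution
`h(t) = h₀ + t • h₀#`, which grows linearly in `t`. -/
theorem heisenberg_sharpSq (h : Fin 3 → Fin 3 → ℂ)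
    (hherm : HermMatC h) (hpsd : PosSemidefC h) :
    (∃ μ : ℝ, 0 ≤ μ ∧
        sharpSqC heisenbergC h = fun α β => if α = 1 ∧ β = 1 then (μ : ℂ) else 0) ∧
      sharpSqC heisenbergC (sharpSqC heisenbergC h) = 0 ∧
      ∀ t : ℝ, HasDerivAt (fun s : ℝ => h + s • sharpSqC heisenbergC h)
        (sharpSqC heisenbergC (h + t • sharpSqC heisenbergC h)) t := by
  obtain ⟨μ, hμ, hd⟩ := det_nonneg h hherm hpsd
  have hform : sharpSqC heisenbergC h
      = fun α β => if α = 1 ∧ β = 1 then (μ : ℂ) else 0 := by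
    rw [sharpSq_eq h]
    funext α β
    simp only [hd]
  refine ⟨⟨μ, hμ, hform⟩, ?_, ?_⟩
  · rw [hform, sharpSq_eq]
    funext α β
    simp
  · intro t
    have heq : sharpSqC heisenbergC (h + t • sharpSqC heisenbergC h)
        = sharpSqC heisenbergC h := by
      rw [sharpSq_eq (h + t • sharpSqC heisenbergC h), sharpSq_eq h]
      funext α β
      simp
    rw [heq]
    have hderiv : HasDerivAt (fun s : ℝ => h + s • sharpSqC heisenbergC h)
        ((1 : ℝ) • sharpSqC heisenbergC h) t :=
      ((hasDerivAt_id t).smul_const _).const_add h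
    simpa using hderiv
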